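/- arXiv:1803.08962 — 8 statements merged into one kernel-verified Lean document; each statement's English description precedes it below -/
import Mathlib

section
/- Let α ≥ 0, β > 0, p > 0, Γ > 0, z := βp + α > 0, B := z/Γ + α(1+β)/(zβ) and Δ := B²/4 − z/(Γβ). If Δ ≥ 0, then both roots λ₁ = −B/2 − √Δ and λ₂ = −B/2 + √Δ of the quadratic λ² + Bλ + z/(Γβ) are real and strictly negative; in particular the stationary point (r*, n*) of the dynamical system is a stable node. -/
/-- If the discriminant quantity `Δ = B²/4 − z/(Γβ)` of the characteristic
polynomial `λ² + Bλ + z/(Γβ)` (where `z = βp + α`, `B = z/Γ + α(1+β)/(zβ)`)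
is nonnegative, then both roots `λ₁ = −B/2 − √Δ` and `λ₂ = −B/2 + √Δ` are real
roots of the quadratic and are strictly negative: the stationary point is a
stable node. -/
theorem stable_node_of_nonneg_discriminant (α β p Γ : ℝ) (hα : 0 ≤ α) (hβ : 0 < β)
    (hp : 0 < p) (hΓ : 0 < Γ) :
    let z : ℝ := β * p + α
    let B : ℝ := z / Γ + α * (1 + β) / (z * β)
    let Δ : ℝ := B ^ 2 / 4 - z / (Γ * β)
    0 ≤ Δ →
      let lam1 : ℝ := -B / 2 - Real.sqrt Δ
      let lam2 : ℝ := -B / 2 + Real.sqrt Δ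
      (lam1 ^ 2 + B * lam1 + z / (Γ * β) = 0) ∧
      (lam2 ^ 2 + B * lam2 + z / (Γ * β) = 0) ∧
      lam1 < 0 ∧ lam2 < 0 := by

  intro z B Δ hΔ lam1 lam2
  have hz : 0 < z := by positivity
  have hC : 0 < z / (Γ * β) := by positivity
  have hB : 0 < B := by positivity
  have hs : Real.sqrt Δ ^ 2 = Δ := Real.sq_sqrt hΔ
  have hlt : Real.sqrt Δ < B / 2 := by
    have h1 : Δ < (B / 2) ^ 2 := by
      have : Δ = B ^ 2 / 4 - z / (Γ * β) := rfl
      nlinarith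
    calc Real.sqrt Δ < Real.sqrt ((B / 2) ^ 2) := by
          exact Real.sqrt_lt_sqrt hΔ h1
      _ = B / 2 := by rw [Real.sqrt_sq (by positivity)]
  have hsn : 0 ≤ Real.sqrt Δ := Real.sqrt_nonneg _
  refine ⟨?_, ?_, ?_, ?_⟩
  · show (-B / 2 - Real.sqrt Δ) ^ 2 + B * (-B / 2 - Real.sqrt Δ) + z / (Γ * β) = 0
    have hs' : Real.sqrt Δ ^ 2 = B ^ 2 / 4 - z / (Γ * β) := hs
    linear_combination hs'
  · show (-B / 2 + Real.sqrt Δ) ^ 2 + B * (-B / 2 + Real.sqrt Δ) + z / (Γ * β) = 0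
    have hs' : Real.sqrt Δ ^ 2 = B ^ 2 / 4 - z / (Γ * β) := hs
    linear_combination hs'
  · show -B / 2 - Real.sqrt Δ < 0
    linarith
  · show -B / 2 + Real.sqrt Δ < 0
    linarith
end

section
/- Let α = 0, β > 0, p > 0 and Γ₀ := β²p/4. Define the oscillation frequency ω(Γ) := √(p/Γ − (βp)²/(4Γ²)) for Γ > Γ₀ (so that ω(Γ)² = −Δ(Γ) > 0). Then ω is strictly increasing on (Γ₀, Γ₀*] and strictly decreasing on [Γ₀*, ∞), where Γ₀* := β²p/2; its maximum value is ω(Γ₀*) = 1/β; and ω(Γ) → 0 as Γ → ∞. -/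
open Filter Topology

/-- For `α = 0`, the oscillation frequency `ω(Γ) = √(p/Γ − (βp)²/(4Γ²))`
(the imaginary part of the eigenvalues for `Γ > Γ₀ = β²p/4`) is strictly
increasing on `(Γ₀, Γ₀*]` and strictly decreasing on `[Γ₀*, ∞)` where
`Γ₀* = β²p/2`; its maximum value is `ω(Γ₀*) = 1/β`, and `ω(Γ) → 0` as
`Γ → ∞`. -/
theorem frequency_behaviour_alpha_zero (β p : ℝ) (hβ : 0 < β) (hp : 0 < p) :
    let ω : ℝ → ℝ := fun Γ => Real.sqrt (p / Γ - (β * p) ^ 2 / (4 * Γ ^ 2))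
    let Γ₀ : ℝ := β ^ 2 * p / 4
    let Γstar : ℝ := β ^ 2 * p / 2
    StrictMonoOn ω (Set.Ioc Γ₀ Γstar) ∧
      StrictAntiOn ω (Set.Ici Γstar) ∧
      ω Γstar = 1 / β ∧
      (∀ Γ : ℝ, Γ₀ < Γ → ω Γ ≤ 1 / β) ∧
      Tendsto ω atTop (nhds 0) := by
  intro ω Γ₀ Γstar
  have hΓ₀pos : (0:ℝ) < Γ₀ := by simp only [Γ₀]; positivity
  have hΓ₀star : Γ₀ < Γstar := by
    simp only [Γ₀, Γstar]
    nlinarith [sq_nonneg β, mul_pos (mul_pos hβ hβ) hp]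
  -- nonnegativity / positivity of the argument of sqrt
  have hpos : ∀ x : ℝ, Γ₀ < x → 0 < p / x - (β * p) ^ 2 / (4 * x ^ 2) := by
    intro x hx
    have hx0 : 0 < x := lt_trans hΓ₀pos hx
    have hx' : β ^ 2 * p / 4 < x := hx
    rw [div_sub_div _ _ (ne_of_gt hx0) (by positivity), lt_div_iff₀ (by positivity)]
    nlinarith [mul_pos (mul_pos hp hx0) (by linarith : (0:ℝ) < 4 * x - β ^ 2 * p)]
  -- comparison of arguments
  have hlt : ∀ a b : ℝ, 0 < a → a < b → 4 * a * b < β ^ 2 * p * (a + b) →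
      p / a - (β * p) ^ 2 / (4 * a ^ 2) < p / b - (β * p) ^ 2 / (4 * b ^ 2) := by
    intro a b ha hab hkey
    have hb : 0 < b := lt_trans ha hab
    rw [div_sub_div _ _ (ne_of_gt ha) (by positivity),
      div_sub_div _ _ (ne_of_gt hb) (by positivity),
      div_lt_div_iff₀ (by positivity) (by positivity)]
    nlinarith [mul_pos (mul_pos (mul_pos ha hb) hp)
      (mul_pos (sub_pos.mpr hab) (sub_pos.mpr hkey))]
  have hgt : ∀ a b : ℝ, 0 < a → a < b → β ^ 2 * p * (a + b) < 4 * a * b →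
      p / b - (β * p) ^ 2 / (4 * b ^ 2) < p / a - (β * p) ^ 2 / (4 * a ^ 2) := by
    intro a b ha hab hkey
    have hb : 0 < b := lt_trans ha hab
    rw [div_sub_div _ _ (ne_of_gt ha) (by positivity),
      div_sub_div _ _ (ne_of_gt hb) (by positivity),
      div_lt_div_iff₀ (by positivity) (by positivity)]
    nlinarith [mul_pos (mul_pos (mul_pos ha hb) hp)
      (mul_pos (sub_pos.mpr hab) (sub_pos.mpr hkey))]
  refine ⟨?_, ?_, ?_, ?_, ?_⟩
  · -- strict mono on (Γ₀, Γstar]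
    intro a ha b hb hab
    have haΓ : Γ₀ < a := ha.1
    have ha0 : 0 < a := lt_trans hΓ₀pos haΓ
    have hb2 : b ≤ β ^ 2 * p / 2 := hb.2
    apply Real.sqrt_lt_sqrt (le_of_lt (hpos a haΓ))
    apply hlt a b ha0 hab
    have haS : a ≤ β ^ 2 * p / 2 := ha.2
    nlinarith [mul_pos ha0 (lt_trans ha0 hab)]
  · -- strict anti on [Γstar, ∞)
    intro a ha b hb hab
    have haS : β ^ 2 * p / 2 ≤ a := ha
    have ha0 : 0 < a := lt_of_lt_of_le (lt_trans hΓ₀pos hΓ₀star) ha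
    have hbΓ : Γ₀ < b := lt_trans (lt_of_lt_of_le hΓ₀star ha) hab
    apply Real.sqrt_lt_sqrt (le_of_lt (hpos b hbΓ))
    apply hgt a b ha0 hab
    nlinarith [mul_pos ha0 (lt_trans ha0 hab)]
  · -- value at Γstar
    have h : p / Γstar - (β * p) ^ 2 / (4 * Γstar ^ 2) = (1 / β) ^ 2 := by
      simp only [Γstar]
      field_simp
      ring
    show Real.sqrt _ = 1 / β
    rw [h, Real.sqrt_sq (by positivity)]
  · -- uniform bound
    intro Γ hΓ
    have hΓ0 : 0 < Γ := lt_trans hΓ₀pos hΓ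
    have hle : p / Γ - (β * p) ^ 2 / (4 * Γ ^ 2) ≤ (1 / β) ^ 2 := by
      have h : (1 / β) ^ 2 - (p / Γ - (β * p) ^ 2 / (4 * Γ ^ 2))
          = (2 * Γ - β ^ 2 * p) ^ 2 / (4 * Γ ^ 2 * β ^ 2) := by
        field_simp
        ring
      have h2 : (0:ℝ) ≤ (2 * Γ - β ^ 2 * p) ^ 2 / (4 * Γ ^ 2 * β ^ 2) := by positivity
      linarith
    show Real.sqrt (p / Γ - (β * p) ^ 2 / (4 * Γ ^ 2)) ≤ 1 / β
    calc Real.sqrt (p / Γ - (β * p) ^ 2 / (4 * Γ ^ 2))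
        ≤ Real.sqrt ((1 / β) ^ 2) := Real.sqrt_le_sqrt hle
      _ = 1 / β := Real.sqrt_sq (by positivity)
  · -- limit at infinity
    have h1 : Tendsto (fun Γ : ℝ => p / Γ) atTop (nhds 0) :=
      Tendsto.div_atTop tendsto_const_nhds tendsto_id
    have h2 : Tendsto (fun Γ : ℝ => (β * p) ^ 2 / (4 * Γ ^ 2)) atTop (nhds 0) := by
      apply Tendsto.div_atTop tendsto_const_nhds
      exact Tendsto.const_mul_atTop (by norm_num) (tendsto_pow_atTop (by norm_num))
    have h3 : Tendsto (fun Γ : ℝ => p / Γ - (β * p) ^ 2 / (4 * Γ ^ 2)) atTop (nhds 0) := by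
      simpa using h1.sub h2
    have := (Real.continuous_sqrt.tendsto 0).comp h3
    simpa [ω, Function.comp_def, Real.sqrt_zero] using this
end

section
/- Let β > 0 and 0 < α < p, set z := βp + α and Γ* := βz²/(2βp + α(1−β)). Then the function Γ ↦ Δ(Γ) := (1/4)[z/Γ + α(1+β)/(zβ)]² − z/(Γβ) is strictly decreasing on the interval (0, Γ*], tends to +∞ as Γ → 0⁺, and attains at Γ = Γ* its minimum value Δ(Γ*) = −(p−α)/(zβ) < 0. -/
open Filter Topology

/-- For `0 < α < p`, `β > 0`, `z = βp + α` and `Γ* = βz²/(2βp + α(1−β))`,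
the discriminant `Δ(Γ) = (1/4)[z/Γ + α(1+β)/(zβ)]² − z/(Γβ)` is strictly
decreasing on `(0, Γ*]`, tends to `+∞` as `Γ → 0⁺`, and attains at `Γ*` its
minimum value `Δ(Γ*) = −(p−α)/(zβ) < 0`. -/
theorem discriminant_decreasing_part (α β p : ℝ) (hβ : 0 < β) (hα : 0 < α)
    (hαp : α < p) :
    let z : ℝ := β * p + α
    let Γstar : ℝ := β * z ^ 2 / (2 * β * p + α * (1 - β))
    let Δ : ℝ → ℝ := fun Γ =>
      (1 / 4) * (z / Γ + α * (1 + β) / (z * β)) ^ 2 - z / (Γ * β)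
    StrictAntiOn Δ (Set.Ioc 0 Γstar) ∧
      Tendsto Δ (nhdsWithin 0 (Set.Ioi 0)) atTop ∧
      Δ Γstar = -(p - α) / (z * β) ∧
      Δ Γstar < 0 ∧
      ∀ Γ : ℝ, 0 < Γ → Δ Γstar ≤ Δ Γ := by
  intro z Γstar Δ
  have hp : 0 < p := hα.trans hαp
  have hz : 0 < z := by positivity
  have hD : 0 < 2 * β * p + α * (1 - β) := by nlinarith
  have hΓs : 0 < Γstar := by
    have h1 : 0 < β * z ^ 2 := by positivity
    exact div_pos h1 hD
  set m : ℝ := (2 * β * p + α * (1 - β)) / (z * β) with hm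
  -- key algebraic identity
  have key : ∀ Γ : ℝ, Γ ≠ 0 →
      Δ Γ = -(p - α) / (z * β) + (1 / 4) * (z / Γ - m) ^ 2 := by
    intro Γ hΓ
    simp only [Δ, hm, z]
    have hz' : (β * p + α) ≠ 0 := ne_of_gt hz
    field_simp
    ring
  have hΓsval : z / Γstar = m := by
    simp only [Γstar, hm]
    rw [div_div_eq_mul_div, eq_div_iff (by positivity)]
    field_simp
  have hΔΓs : Δ Γstar = -(p - α) / (z * β) := by
    rw [key Γstar hΓs.ne', hΓsval]
    simp
  refine ⟨?_, ?_, hΔΓs, ?_, ?_⟩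
  · -- strict anti
    intro x hx y hy hxy
    rw [key x (hx.1.ne'), key y (hy.1.ne')]
    have hx1 : m ≤ z / y := by
      rw [← hΓsval]
      gcongr <;> [exact hy.1; exact hy.2]
    have hx2 : z / y < z / x := by
      exact div_lt_div_of_pos_left hz hx.1 hxy
    have h0 : 0 ≤ z / y - m := by linarith
    nlinarith
  · -- tendsto atTop
    have h1 : Tendsto (fun Γ : ℝ => z / Γ) (nhdsWithin 0 (Set.Ioi 0)) atTop := by
      have := tendsto_inv_nhdsGT_zero.const_mul_atTop hz
      simpa [div_eq_mul_inv] using this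
    have h2 : Tendsto (fun Γ : ℝ => z / Γ - m) (nhdsWithin 0 (Set.Ioi 0)) atTop :=
      h1.atTop_add tendsto_const_nhds
    have h3 : Tendsto (fun Γ : ℝ => (z / Γ - m) ^ 2) (nhdsWithin 0 (Set.Ioi 0)) atTop := by
      simpa [sq] using h2.atTop_mul_atTop₀ h2
    have h4 : Tendsto (fun Γ : ℝ =>
        -(p - α) / (z * β) + (1 / 4) * (z / Γ - m) ^ 2)
        (nhdsWithin 0 (Set.Ioi 0)) atTop := by
      apply tendsto_atTop_add_const_left
      exact h3.const_mul_atTop (by norm_num)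
    refine h4.congr' ?_
    filter_upwards [self_mem_nhdsWithin] with Γ (hΓ : (0:ℝ) < Γ)
    exact (key Γ hΓ.ne').symm
  · rw [hΔΓs]
    have : 0 < p - α := by linarith
    have hzb : 0 < z * β := by positivity
    rw [neg_div]
    simpa using div_pos this hzb
  · intro Γ hΓ
    rw [hΔΓs, key Γ hΓ.ne']
    nlinarith [sq_nonneg (z / Γ - m)]
end

section
/- Let β > 0 and 0 < α < p, set z := βp + α and Γ* := βz²/(2βp + α(1−β)). Then the function Γ ↦ Δ(Γ) := (1/4)[z/Γ + α(1+β)/(zβ)]² − z/(Γβ) is strictly increasing on the interval [Γ*, ∞), and Δ(Γ) → [α(1+β)/(2zβ)]² > 0 as Γ → ∞. -/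
open Filter Topology

/-- For `0 < α < p`, `β > 0`, `z = βp + α` and `Γ* = βz²/(2βp + α(1−β))`,
the discriminant `Δ(Γ) = (1/4)[z/Γ + α(1+β)/(zβ)]² − z/(Γβ)` is strictly
increasing on `[Γ*, ∞)` and tends to the positive limit `[α(1+β)/(2zβ)]²`
as `Γ → ∞`. -/
theorem discriminant_increasing_part (α β p : ℝ) (hβ : 0 < β) (hα : 0 < α)
    (hαp : α < p) :
    let z : ℝ := β * p + α
    let Γstar : ℝ := β * z ^ 2 / (2 * β * p + α * (1 - β))
    let Δ : ℝ → ℝ := fun Γ =>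
      (1 / 4) * (z / Γ + α * (1 + β) / (z * β)) ^ 2 - z / (Γ * β)
    StrictMonoOn Δ (Set.Ici Γstar) ∧
      Tendsto Δ atTop (nhds ((α * (1 + β) / (2 * z * β)) ^ 2)) ∧
      0 < (α * (1 + β) / (2 * z * β)) ^ 2 := by
  intro z Γstar Δ
  have hz : 0 < z := by have := mul_pos hβ (hα.trans hαp); simp only [z]; linarith
  have hD : 0 < 2 * β * p + α * (1 - β) := by nlinarith [mul_pos hβ (sub_pos.mpr hαp)]
  have hΓs : 0 < Γstar := div_pos (by positivity) hD
  -- key identity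
  have key : ∀ Γ : ℝ, Γ ≠ 0 →
      Δ Γ = (1 / 4) * (z / Γstar - z / Γ) ^ 2
        + (α * (1 + β) / (z * β) / β - 1 / β ^ 2) := by
    intro Γ hΓ
    simp only [Δ, Γstar]
    field_simp
    ring
  refine ⟨?_, ?_, ?_⟩
  · intro a ha b hb hab
    have ha0 : 0 < a := lt_of_lt_of_le hΓs ha
    have hb0 : 0 < b := lt_of_lt_of_le hΓs (le_of_lt (lt_of_le_of_lt ha hab))
    rw [key a ha0.ne', key b hb0.ne']
    have h1 : z / a ≤ z / Γstar := div_le_div_of_nonneg_left hz.le hΓs ha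
    have h2 : z / b < z / a := div_lt_div_of_pos_left hz ha0 hab
    have t1 : (0:ℝ) ≤ z / Γstar - z / a := by linarith
    have t2 : z / Γstar - z / a < z / Γstar - z / b := by linarith
    nlinarith [mul_self_lt_mul_self t1 t2]
  · have hinv : Tendsto (fun Γ : ℝ => Γ⁻¹) atTop (nhds 0) := tendsto_inv_atTop_zero
    have hF : Tendsto (fun t : ℝ =>
        (1 / 4) * (z * t + α * (1 + β) / (z * β)) ^ 2 - z * t / β) (nhds 0)
        (nhds ((α * (1 + β) / (2 * z * β)) ^ 2)) := by
      have hc : Continuous (fun t : ℝ =>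
          (1 / 4) * (z * t + α * (1 + β) / (z * β)) ^ 2 - z * t / β) := by
        continuity
      have := hc.tendsto 0
      convert this using 2
      field_simp
      ring
    have := hF.comp hinv
    convert this using 1
    funext Γ
    simp only [Function.comp, Δ]
    ring
  · positivity
end

section
/- Let β > 0 and 0 < α < p, and set z := βp + α. Define Γ₁ := (β²z²/(α²(1+β)²))·[(2z − α(1+β))/β − 2√(z(p−α)/β)] and Γ₂ := (β²z²/(α²(1+β)²))·[(2z − α(1+β))/β + 2√(z(p−α)/β)]. Then 0 < Γ₁ < Γ₂, Δ(Γ₁) = Δ(Γ₂) = 0, and Γ₁, Γ₂ are the only zeros of Δ on (0, ∞), where Δ(Γ) := (1/4)[z/Γ + α(1+β)/(zβ)]² − z/(Γβ). -/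
/-- For `0 < α < p`, `β > 0` and `z = βp + α`, the values
`Γ₁ = (β²z²/(α²(1+β)²))·[(2z − α(1+β))/β − 2√(z(p−α)/β)]` and
`Γ₂ = (β²z²/(α²(1+β)²))·[(2z − α(1+β))/β + 2√(z(p−α)/β)]` satisfy
`0 < Γ₁ < Γ₂`, are zeros of the discriminant
`Δ(Γ) = (1/4)[z/Γ + α(1+β)/(zβ)]² − z/(Γβ)`, and are the only zeros of `Δ`
on `(0, ∞)`. -/
theorem discriminant_zeros (α β p : ℝ) (hβ : 0 < β) (hα : 0 < α) (hαp : α < p) :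
    let z : ℝ := β * p + α
    let Γ₁ : ℝ := (β ^ 2 * z ^ 2 / (α ^ 2 * (1 + β) ^ 2)) *
      ((2 * z - α * (1 + β)) / β - 2 * Real.sqrt (z * (p - α) / β))
    let Γ₂ : ℝ := (β ^ 2 * z ^ 2 / (α ^ 2 * (1 + β) ^ 2)) *
      ((2 * z - α * (1 + β)) / β + 2 * Real.sqrt (z * (p - α) / β))
    let Δ : ℝ → ℝ := fun Γ =>
      (1 / 4) * (z / Γ + α * (1 + β) / (z * β)) ^ 2 - z / (Γ * β)
    0 < Γ₁ ∧ Γ₁ < Γ₂ ∧ Δ Γ₁ = 0 ∧ Δ Γ₂ = 0 ∧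
      ∀ Γ : ℝ, 0 < Γ → Δ Γ = 0 → Γ = Γ₁ ∨ Γ = Γ₂ := by
  intro z Γ₁ Γ₂ Δ
  have hzdef : z = β * p + α := rfl
  have hp : 0 < p := lt_trans hα hαp
  have hz : 0 < z := by rw [hzdef]; positivity
  have h1β : (0:ℝ) < 1 + β := by linarith
  have harg : 0 < z * (p - α) / β := by
    apply div_pos (mul_pos hz (by linarith)) hβ
  set s := Real.sqrt (z * (p - α) / β) with hs_def
  have hs0 : 0 < s := Real.sqrt_pos.mpr harg
  have hs2 : s ^ 2 = z * (p - α) / β := Real.sq_sqrt harg.le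
  have hs3 : (β * s) ^ 2 = z * (β * (p - α)) := by
    rw [mul_pow, hs2]; field_simp
  have hw : z - β * (p - α) = α * (1 + β) := by rw [hzdef]; ring
  have hwpos : 0 < β * (p - α) := mul_pos hβ (by linarith)
  -- positivity of the bracket of Γ₁
  have hbig : 2 * β * s < 2 * z - α * (1 + β) := by
    nlinarith [hs3, hw, mul_pos hβ hs0, mul_pos (mul_pos hα h1β) (mul_pos hα h1β), hwpos]
  have hbr : 0 < (2 * z - α * (1 + β)) / β - 2 * s := by
    rw [sub_pos, lt_div_iff₀ hβ]; nlinarith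
  have hK : 0 < β ^ 2 * z ^ 2 / (α ^ 2 * (1 + β) ^ 2) := by positivity
  have hΓ₁ : 0 < Γ₁ := mul_pos hK hbr
  have hΓ₂ : 0 < Γ₂ := by
    apply mul_pos hK; nlinarith
  have h12 : Γ₁ < Γ₂ := by
    simp only [Γ₁, Γ₂]
    apply mul_lt_mul_of_pos_left _ hK
    linarith
  -- the quadratic with the same zeros as Δ
  set Q : ℝ → ℝ := fun Γ => α^2*(1+β)^2 * Γ^2 + (2*α*(1+β)*z^2*β - 4*z^3*β) * Γ + z^4*β^2 with hQ_def
  have hαne : α ≠ 0 := ne_of_gt hα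
  have hβne : β ≠ 0 := ne_of_gt hβ
  have hzne : z ≠ 0 := ne_of_gt hz
  have h1βne : (1:ℝ) + β ≠ 0 := ne_of_gt h1β
  have key : ∀ Γ : ℝ, Γ ≠ 0 → Δ Γ * (4 * Γ^2 * z^2 * β^2) = Q Γ := by
    intro Γ hΓ
    simp only [Δ, Q]
    field_simp
    ring
  -- sum and product of the roots
  have hsum : Γ₁ + Γ₂ = (4*z^3*β - 2*α*(1+β)*z^2*β) / (α^2*(1+β)^2) := by
    simp only [Γ₁, Γ₂, ← hs_def]
    field_simp
    ring
  have hprod_small : ((2*z - α*(1+β))/β - 2*s) * ((2*z - α*(1+β))/β + 2*s)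
      = (α*(1+β)/β)^2 := by
    have e : ((2*z - α*(1+β))/β - 2*s) * ((2*z - α*(1+β))/β + 2*s)
        = ((2*z - α*(1+β))/β)^2 - 4*s^2 := by ring
    rw [e, hs2, hzdef]
    field_simp
    ring
  have hprod : Γ₁ * Γ₂ = z^4*β^2 / (α^2*(1+β)^2) := by
    have e2 : Γ₁ * Γ₂ = (β ^ 2 * z ^ 2 / (α ^ 2 * (1 + β) ^ 2))^2 * (α*(1+β)/β)^2 := by
      simp only [Γ₁, Γ₂, ← hs_def]
      linear_combination (β ^ 2 * z ^ 2 / (α ^ 2 * (1 + β) ^ 2))^2 * hprod_small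
    rw [e2]
    field_simp
  have hfac : ∀ Γ : ℝ, Q Γ = α^2*(1+β)^2 * ((Γ - Γ₁) * (Γ - Γ₂)) := by
    intro Γ
    simp only [Q]
    have e3 : (Γ - Γ₁) * (Γ - Γ₂) = Γ^2 - (Γ₁ + Γ₂) * Γ + Γ₁ * Γ₂ := by ring
    rw [e3, hsum, hprod]
    field_simp
    ring
  have hQiff : ∀ Γ : ℝ, Γ ≠ 0 → (Δ Γ = 0 ↔ Q Γ = 0) := by
    intro Γ hΓ
    constructor
    · intro h; rw [← key Γ hΓ, h, zero_mul]
    · intro h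
      have h2 := key Γ hΓ
      rw [h] at h2
      have hne : (4 * Γ^2 * z^2 * β^2) ≠ 0 := by positivity
      exact (mul_eq_zero.mp h2).resolve_right hne
  have hΔ1 : Δ Γ₁ = 0 := by
    rw [hQiff Γ₁ (ne_of_gt hΓ₁), hfac]; ring
  have hΔ2 : Δ Γ₂ = 0 := by
    rw [hQiff Γ₂ (ne_of_gt hΓ₂), hfac]; ring
  refine ⟨hΓ₁, h12, hΔ1, hΔ2, fun Γ hΓ hΔ => ?_⟩
  have hQ0 : Q Γ = 0 := (hQiff Γ (ne_of_gt hΓ)).mp hΔ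
  rw [hfac] at hQ0
  rcases mul_eq_zero.mp hQ0 with h | h
  · exact absurd h (by positivity)
  · rcases mul_eq_zero.mp h with h' | h'
    · left; linarith [sub_eq_zero.mp h']
    · right; linarith [sub_eq_zero.mp h']
end

section
/- Fix β > 0 and p > 0, and for 0 < α < p define z(α) := βp + α, Γ₁(α) := (β²z(α)²/(α²(1+β)²))·[(2z(α) − α(1+β))/β − 2√(z(α)(p−α)/β)] and Γ₂(α) := (β²z(α)²/(α²(1+β)²))·[(2z(α) − α(1+β))/β + 2√(z(α)(p−α)/β)]. Then, in the high-pumping limit, Γ₁(α) → Γ₀ := β²p/4 and Γ₂(α) → +∞ as α → 0⁺. -/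
open Filter Topology

/-- Fix `β > 0`, `p > 0`. With `z(α) = βp + α` and the two discriminant zeros
`Γ₁(α), Γ₂(α)` as in the paper, in the high-pumping limit `α → 0⁺` one has
`Γ₁(α) → Γ₀ = β²p/4` and `Γ₂(α) → +∞`. -/
theorem high_pumping_limit (β p : ℝ) (hβ : 0 < β) (hp : 0 < p) :
    let z : ℝ → ℝ := fun α => β * p + α
    let Γ₁ : ℝ → ℝ := fun α => (β ^ 2 * (z α) ^ 2 / (α ^ 2 * (1 + β) ^ 2)) *
      ((2 * z α - α * (1 + β)) / β - 2 * Real.sqrt (z α * (p - α) / β))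
    let Γ₂ : ℝ → ℝ := fun α => (β ^ 2 * (z α) ^ 2 / (α ^ 2 * (1 + β) ^ 2)) *
      ((2 * z α - α * (1 + β)) / β + 2 * Real.sqrt (z α * (p - α) / β))
    Tendsto Γ₁ (nhdsWithin 0 (Set.Ioi 0)) (nhds (β ^ 2 * p / 4)) ∧
      Tendsto Γ₂ (nhdsWithin 0 (Set.Ioi 0)) atTop := by
  intro z Γ₁ Γ₂
  have hβ' : β ≠ 0 := hβ.ne'
  have h1β : (0:ℝ) < 1 + β := by linarith
  set A : ℝ → ℝ := fun α => (2 * z α - α * (1 + β)) / β with hA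
  set B : ℝ → ℝ := fun α => 2 * Real.sqrt (z α * (p - α) / β) with hB
  -- limits
  have hzlim : Tendsto z (𝓝[>] (0:ℝ)) (𝓝 (β * p)) := by
    have : Tendsto z (𝓝 (0:ℝ)) (𝓝 (z 0)) := (by fun_prop : Continuous z).tendsto 0
    simpa [z] using this.mono_left nhdsWithin_le_nhds
  have hAlim : Tendsto A (𝓝[>] (0:ℝ)) (𝓝 (2 * p)) := by
    have hc : Continuous A := by fun_prop
    have : Tendsto A (𝓝 (0:ℝ)) (𝓝 (A 0)) := hc.tendsto 0
    have h0 : A 0 = 2 * p := by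
      simp only [hA, z]
      field_simp
      ring
    rw [h0] at this
    exact this.mono_left nhdsWithin_le_nhds
  have hBlim : Tendsto B (𝓝[>] (0:ℝ)) (𝓝 (2 * p)) := by
    have hc : Continuous B := by fun_prop
    have : Tendsto B (𝓝 (0:ℝ)) (𝓝 (B 0)) := hc.tendsto 0
    have h0 : B 0 = 2 * p := by
      have : z 0 * (p - 0) / β = p ^ 2 := by
        simp only [z]; field_simp; ring
      simp only [hB, this]
      rw [Real.sqrt_sq hp.le]
    rw [h0] at this
    exact this.mono_left nhdsWithin_le_nhds
  have hABlim : Tendsto (fun α => A α + B α) (𝓝[>] (0:ℝ)) (𝓝 (4 * p)) := by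
    have := hAlim.add hBlim
    simpa [show 2*p + 2*p = 4*p by ring] using this
  -- eventually facts
  have hev : ∀ᶠ α in 𝓝[>] (0:ℝ), 0 < α ∧ α < p := by
    filter_upwards [self_mem_nhdsWithin,
      eventually_nhdsWithin_of_eventually_nhds (eventually_lt_nhds hp)] with α h1 h2
    exact ⟨h1, h2⟩
  have hkey : ∀ α : ℝ, 0 < α → α < p →
      (0 < A α + B α) ∧ Γ₁ α = z α ^ 2 / (A α + B α) := by
    intro α hα hαp
    have hzpos : 0 < z α := by simp only [z]; positivity
    have hApos : 0 < A α := by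
      simp only [hA, z]
      apply div_pos _ hβ
      nlinarith
    have hBnn : 0 ≤ B α := by
      simp only [hB]; positivity
    have hABpos : 0 < A α + B α := by linarith
    refine ⟨hABpos, ?_⟩
    rw [eq_div_iff hABpos.ne']
    have hnn : 0 ≤ z α * (p - α) / β :=
      div_nonneg (mul_nonneg hzpos.le (by linarith)) hβ.le
    have hS2 : Real.sqrt (z α * (p - α) / β) ^ 2 = z α * (p - α) / β :=
      Real.sq_sqrt hnn
    simp only [Γ₁, hA, hB, z] at hS2 ⊢
    set S := Real.sqrt ((β * p + α) * (p - α) / β) with hSdef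
    have hα' : α ≠ 0 := hα.ne'
    have h1β' : (1:ℝ) + β ≠ 0 := h1β.ne'
    field_simp at hS2 ⊢
    linear_combination (-(4:ℝ) * β) * hS2
  constructor
  · have heq : Γ₁ =ᶠ[𝓝[>] (0:ℝ)] fun α => z α ^ 2 / (A α + B α) := by
      filter_upwards [hev] with α ⟨h1, h2⟩
      exact (hkey α h1 h2).2
    have hlim : Tendsto (fun α => z α ^ 2 / (A α + B α)) (𝓝[>] (0:ℝ))
        (𝓝 ((β * p) ^ 2 / (4 * p))) := by
      exact (hzlim.pow 2).div hABlim (by positivity)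
    have : (β * p) ^ 2 / (4 * p) = β ^ 2 * p / 4 := by field_simp
    rw [this] at hlim
    exact hlim.congr' heq.symm
  · have hC : Tendsto (fun α => β ^ 2 * z α ^ 2 / (α ^ 2 * (1 + β) ^ 2))
        (𝓝[>] (0:ℝ)) atTop := by
      have hnum : Tendsto (fun α => β ^ 2 * z α ^ 2) (𝓝[>] (0:ℝ))
          (𝓝 (β ^ 2 * (β * p) ^ 2)) := (tendsto_const_nhds.mul (hzlim.pow 2))
      have hden : Tendsto (fun α : ℝ => α ^ 2 * (1 + β) ^ 2) (𝓝[>] (0:ℝ))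
          (𝓝[>] (0:ℝ)) := by
        rw [tendsto_nhdsWithin_iff]
        constructor
        · have : Tendsto (fun α : ℝ => α ^ 2 * (1 + β) ^ 2) (𝓝 (0:ℝ))
              (𝓝 (0 ^ 2 * (1 + β) ^ 2)) :=
                ((continuous_pow 2).mul continuous_const).tendsto 0
          simpa using this.mono_left nhdsWithin_le_nhds
        · filter_upwards [self_mem_nhdsWithin] with α hα
          have hα0 : (0:ℝ) < α := hα
          exact mul_pos (pow_pos hα0 2) (pow_pos h1β 2)
      have hinv : Tendsto (fun α : ℝ => (α ^ 2 * (1 + β) ^ 2)⁻¹) (𝓝[>] (0:ℝ)) atTop :=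
        tendsto_inv_nhdsGT_zero.comp hden
      have := hnum.pos_mul_atTop (by positivity) hinv
      simpa [div_eq_mul_inv] using this
    have := hC.atTop_mul_pos (show (0:ℝ) < 4 * p by positivity) hABlim
    exact this
end

section
/- Let α > 0, β > 0, p > 0, Γ > 0, (r*, n*) = (p(1+β)/(βp+α), βp), and suppose Γ/β + r*/2 > 1. Let f(x,y) = (Γ+1)x + y and let L_{m-f} be the mean-field generator. Then there exist ε > 0 and a finite set A ⊂ (1/Γ)ℤ₊ × ℤ₊ such that (L_{m-f} f)(x,y) ≤ −ε for all lattice points (x,y) ∈ ((1/Γ)ℤ₊ × ℤ₊) \ A; one may take A = {(x,y) ∈ (1/Γ)ℤ₊ × ℤ₊ : x n*/2 + y r*/2 + αx + (Γ/β − 1)y ≤ (Γ+1)p + Γε}, which is finite. -/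
lemma drift_eq_aux (α β p Γ ns rs x y : ℝ) (hΓ : Γ ≠ 0) (hβ : β ≠ 0) :
    (1 / 2) * (x * ns + rs * y) * (((Γ + 1) * (x - 1 / Γ) + (y + 1)) - ((Γ + 1) * x + y))
      + α * x * (((Γ + 1) * (x - 1 / Γ) + (y + 1)) - ((Γ + 1) * x + y))
      + y * (((Γ + 1) * (x + 1 / Γ) + (y - 1)) - ((Γ + 1) * x + y))
      + p * (((Γ + 1) * (x + 1 / Γ) + y) - ((Γ + 1) * x + y))
      + β⁻¹ * y * (((Γ + 1) * x + (y - 1)) - ((Γ + 1) * x + y))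
    = ((Γ + 1) * p - (x * ns / 2 + y * rs / 2 + α * x + (Γ / β - 1) * y)) / Γ := by
  field_simp
  ring

/-- Ergodicity criterion for the mean-field chain: if `Γ/β + r*/2 > 1`, then
for the Lyapunov function `f(x,y) = (Γ+1)x + y` there exist `ε > 0` and a
finite set `A ⊂ (1/Γ)ℤ₊ × ℤ₊` (one may take
`A = {(x,y) : x n*/2 + y r*/2 + αx + (Γ/β − 1)y ≤ (Γ+1)p + Γε}`) such that
`(L_{m-f} f)(x,y) ≤ −ε` for all lattice points outside `A`. -/
theorem mean_field_lyapunov_drift (α β p Γ : ℝ) (hα : 0 < α) (hβ : 0 < β)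
    (hp : 0 < p) (hΓ : 0 < Γ)
    (hcond : Γ / β + (p * (1 + β) / (β * p + α)) / 2 > 1) :
    let rstar : ℝ := p * (1 + β) / (β * p + α)
    let nstar : ℝ := β * p
    let L : (ℝ → ℝ → ℝ) → ℝ → ℝ → ℝ := fun g x y =>
      (1 / 2) * (x * nstar + rstar * y) * (g (x - 1 / Γ) (y + 1) - g x y)
      + α * x * (g (x - 1 / Γ) (y + 1) - g x y)
      + y * (g (x + 1 / Γ) (y - 1) - g x y)
      + p * (g (x + 1 / Γ) y - g x y)
      + β⁻¹ * y * (g x (y - 1) - g x y)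
    let f : ℝ → ℝ → ℝ := fun x y => (Γ + 1) * x + y
    let lattice : Set (ℝ × ℝ) :=
      {q | (∃ k : ℕ, q.1 = (k : ℝ) / Γ) ∧ (∃ m : ℕ, q.2 = (m : ℝ))}
    ∃ ε > (0 : ℝ),
      let A : Set (ℝ × ℝ) := {q ∈ lattice |
        q.1 * nstar / 2 + q.2 * rstar / 2 + α * q.1 + (Γ / β - 1) * q.2
          ≤ (Γ + 1) * p + Γ * ε}
      A.Finite ∧ ∀ q ∈ lattice, q ∉ A → L f q.1 q.2 ≤ -ε := by
  intro rstar nstar L f lattice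
  have hden : 0 < β * p + α := by positivity
  have hr : 0 < rstar := div_pos (by positivity) hden
  have hn : 0 < nstar := by positivity
  set cx : ℝ := nstar / 2 + α with hcx
  set cy : ℝ := rstar / 2 + (Γ / β - 1) with hcy
  have hcxpos : 0 < cx := by positivity
  have hcypos : 0 < cy := by
    have h : Γ / β + rstar / 2 > 1 := hcond
    simp only [hcy]; linarith
  refine ⟨1, one_pos, ?_⟩
  intro A
  set C : ℝ := (Γ + 1) * p + Γ * 1 with hC
  have hCpos : 0 < C := by positivity
  constructor
  · -- finiteness of A
    set Kn : ℕ := ⌈C * Γ / cx⌉₊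
    set Mn : ℕ := ⌈C / cy⌉₊
    have hfin : (Set.Finite ((fun km : ℕ × ℕ => ((km.1 : ℝ) / Γ, (km.2 : ℝ))) ''
        (Set.Iic Kn ×ˢ Set.Iic Mn))) :=
      ((Set.finite_Iic Kn).prod (Set.finite_Iic Mn)).image _
    refine hfin.subset ?_
    rintro q ⟨⟨⟨k, hk⟩, ⟨m, hm⟩⟩, hineq⟩
    have hx0 : (0:ℝ) ≤ q.1 := by rw [hk]; positivity
    have hy0 : (0:ℝ) ≤ q.2 := by rw [hm]; positivity
    have hval : q.1 * cx + q.2 * cy ≤ C := by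
      simp only [hcx, hcy, hC]; nlinarith [hineq]
    have hxq : q.1 ≤ C / cx := by
      rw [le_div_iff₀ hcxpos]
      nlinarith [mul_nonneg hy0 hcypos.le]
    have hyq : q.2 ≤ C / cy := by
      rw [le_div_iff₀ hcypos]
      nlinarith [mul_nonneg hx0 hcxpos.le]
    refine ⟨(k, m), ⟨?_, ?_⟩, ?_⟩
    · have h1 : (k : ℝ) / Γ ≤ C / cx := hk ▸ hxq
      have h2 : (k : ℝ) ≤ C * Γ / cx := by
        have h3 : (k : ℝ) ≤ C / cx * Γ := (div_le_iff₀ hΓ).mp h1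
        calc (k : ℝ) ≤ C / cx * Γ := h3
          _ = C * Γ / cx := by rw [div_mul_eq_mul_div]
      exact Set.mem_Iic.2 (Nat.cast_le.mp (h2.trans (Nat.le_ceil _)))
    · have h1 : (m : ℝ) ≤ C / cy := hm ▸ hyq
      exact Set.mem_Iic.2 (Nat.cast_le.mp (h1.trans (Nat.le_ceil _)))
    · exact Prod.ext hk.symm hm.symm
  · -- drift bound outside A
    rintro q ⟨⟨k, hk⟩, ⟨m, hm⟩⟩ hqA
    have hineq : ¬ (q.1 * nstar / 2 + q.2 * rstar / 2 + α * q.1 + (Γ / β - 1) * q.2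
        ≤ (Γ + 1) * p + Γ * 1) := fun h => hqA ⟨⟨⟨k, hk⟩, ⟨m, hm⟩⟩, h⟩
    push_neg at hineq
    have hLf : L f q.1 q.2 = ((Γ + 1) * p
        - (q.1 * nstar / 2 + q.2 * rstar / 2 + α * q.1 + (Γ / β - 1) * q.2)) / Γ :=
      drift_eq_aux α β p Γ nstar rstar q.1 q.2 (ne_of_gt hΓ) (ne_of_gt hβ)
    rw [hLf, div_le_iff₀ hΓ]
    nlinarith [hineq]
end

section
/- Let α > 0, β > 0, p > 0 and Γ > β. Let f(x,y) = (Γ+1)x + y and let L₁ be the one-unit generator. Then there exist ε > 0 and a finite set A ⊂ (1/Γ)ℤ₊ × ℤ₊ such that (L₁ f)(x,y) ≤ −ε for all lattice points (x,y) ∈ ((1/Γ)ℤ₊ × ℤ₊) \ A; one may take A = {(x,y) ∈ (1/Γ)ℤ₊ × ℤ₊ : xy + αx + (Γ/β − 1)y ≤ (Γ+1)p + Γε}, which is a finite set. -/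
/-- Recurrence criterion for the one-unit chain: if `Γ > β`, then for the
Lyapunov function `f(x,y) = (Γ+1)x + y` there exist `ε > 0` and a finite set
`A ⊂ (1/Γ)ℤ₊ × ℤ₊` (one may take
`A = {(x,y) : xy + αx + (Γ/β − 1)y ≤ (Γ+1)p + Γε}`) such that
`(L₁ f)(x,y) ≤ −ε` for all lattice points outside `A`. -/
theorem one_unit_lyapunov_drift (α β p Γ : ℝ) (hα : 0 < α) (hβ : 0 < β)
    (hp : 0 < p) (hΓβ : β < Γ) :
    let L : (ℝ → ℝ → ℝ) → ℝ → ℝ → ℝ := fun g x y =>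
      x * y * (g (x - 1 / Γ) (y + 1) - g x y)
      + α * x * (g (x - 1 / Γ) (y + 1) - g x y)
      + y * (g (x + 1 / Γ) (y - 1) - g x y)
      + p * (g (x + 1 / Γ) y - g x y)
      + β⁻¹ * y * (g x (y - 1) - g x y)
    let f : ℝ → ℝ → ℝ := fun x y => (Γ + 1) * x + y
    let lattice : Set (ℝ × ℝ) :=
      {q | (∃ k : ℕ, q.1 = (k : ℝ) / Γ) ∧ (∃ m : ℕ, q.2 = (m : ℝ))}
    ∃ ε > (0 : ℝ),
      let A : Set (ℝ × ℝ) := {q ∈ lattice |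
        q.1 * q.2 + α * q.1 + (Γ / β - 1) * q.2 ≤ (Γ + 1) * p + Γ * ε}
      A.Finite ∧ ∀ q ∈ lattice, q ∉ A → L f q.1 q.2 ≤ -ε := by
  intro L f lattice
  have hΓ : (0 : ℝ) < Γ := hβ.trans hΓβ
  have hd : (0 : ℝ) < Γ / β - 1 := by
    have : (1 : ℝ) < Γ / β := (one_lt_div hβ).2 hΓβ
    linarith
  refine ⟨1, one_pos, ?_, ?_⟩
  · -- finiteness
    set c : ℝ := (Γ + 1) * p + Γ * 1 with hcdef
    have hc : (0 : ℝ) < c := by positivity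
    set K : ℕ := ⌊Γ * c / α⌋₊ + 1 with hK
    set M : ℕ := ⌊c / (Γ / β - 1)⌋₊ + 1 with hM
    apply Set.Finite.subset
      (((Finset.range K ×ˢ Finset.range M).finite_toSet).image
        (fun q : ℕ × ℕ => ((q.1 : ℝ) / Γ, (q.2 : ℝ))))
    rintro ⟨x, y⟩ ⟨⟨⟨k, hk⟩, ⟨m, hm⟩⟩, hle⟩
    dsimp only at hk hm hle
    subst hk; subst hm
    simp only [Set.mem_image, Finset.coe_product, Set.mem_prod, Finset.mem_coe,
      Finset.mem_range]
    have hk0 : (0:ℝ) ≤ (k:ℝ) / Γ := by positivity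
    have hm0 : (0:ℝ) ≤ (m:ℝ) := by positivity
    have hcan : (k:ℝ) / Γ * Γ = (k:ℝ) := div_mul_cancel₀ _ hΓ.ne'
    refine ⟨(k, m), ⟨?_, ?_⟩, rfl⟩
    · have hax : α * ((k:ℝ) / Γ) ≤ c := by
        nlinarith [mul_nonneg hk0 hm0, mul_nonneg hd.le hm0]
      have hkb : (k : ℝ) * α ≤ Γ * c := by nlinarith
      have : (k : ℝ) ≤ Γ * c / α := (le_div_iff₀ hα).2 hkb
      have := Nat.le_floor this
      omega
    · have hay : (Γ / β - 1) * (m:ℝ) ≤ c := by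
        nlinarith [mul_nonneg hk0 hm0, mul_nonneg hα.le hk0]
      have : (m : ℝ) ≤ c / (Γ / β - 1) := by
        rw [le_div_iff₀ hd]; linarith [mul_comm (m:ℝ) (Γ / β - 1)]
      have := Nat.le_floor this
      omega
  · -- drift bound
    rintro ⟨x, y⟩ ⟨⟨k, hk⟩, ⟨m, hm⟩⟩ hA
    have hnot : ¬ (x * y + α * x + (Γ / β - 1) * y ≤ (Γ + 1) * p + Γ * 1) := by
      intro h; exact hA ⟨⟨⟨k, hk⟩, ⟨m, hm⟩⟩, h⟩
    push_neg at hnot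
    have hLf : L f x y =
        (-(x * y + α * x + (Γ / β - 1) * y) + (Γ + 1) * p) / Γ := by
      simp only [L, f]
      field_simp
      ring
    rw [hLf, div_le_iff₀ hΓ]
    nlinarith
end
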